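/- Let F be a non-archimedean local field with valuation ring 𝔬 and maximal ideal 𝔭, let n ≥ 1, and let J = { [[a,b],[c,d]] ∈ SL₂(F) : a,d ∈ 𝔬ˣ, b ∈ 𝔬, c ∈ 𝔭ⁿ }. For x ∈ Fˣ, the element w₀·u(x) lies in B·J (with B the upper triangular Borel subgroup of SL₂(F)) if and only if x⁻¹ ∈ 𝔭ⁿ. -/

import Mathlib

open Matrix

/-- `x ∈ F` lies in `𝔭ⁿ`, the n-th power of the maximal ideal of the valuation ring `O`. -/
def InMaxIdealPow {F : Type*} [Field F] (O : ValuationSubring F) (n : ℕ) (x : F) : Prop :=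
  ∃ y : O, y ∈ (IsLocalRing.maximalIdeal O) ^ n ∧ (y : F) = x

/-- `x ∈ F` lies in `𝔬ˣ`, the unit group of the valuation ring `O`. -/
def IsUnitOf {F : Type*} [Field F] (O : ValuationSubring F) (x : F) : Prop :=
  ∃ u : Oˣ, ((u : O) : F) = x

/-- The matrix `g` lies in `J = { [[a,b],[c,d]] ∈ SL₂(F) : a,d ∈ 𝔬ˣ, b ∈ 𝔬, c ∈ 𝔭ⁿ }`. -/
def InJ {F : Type*} [Field F] (O : ValuationSubring F) (n : ℕ)
    (g : Matrix (Fin 2) (Fin 2) F) : Prop :=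
  g.det = 1 ∧ IsUnitOf O (g 0 0) ∧ IsUnitOf O (g 1 1) ∧ g 0 1 ∈ O ∧ InMaxIdealPow O n (g 1 0)

/-- The matrix `g` lies in the upper-triangular Borel `B` of SL₂(F). -/
def InB {F : Type*} [Field F] (g : Matrix (Fin 2) (Fin 2) F) : Prop :=
  g.det = 1 ∧ g 1 0 = 0

/-- Support criterion: for `x ∈ Fˣ`, `w₀·u(x) ∈ B·J` iff `x⁻¹ ∈ 𝔭ⁿ`. -/
theorem support_criterion {F : Type*} [Field F] (O : ValuationSubring F) (n : ℕ)
    (hn : 1 ≤ n) (x : F) (hx : x ≠ 0) :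
    (∃ b j : Matrix (Fin 2) (Fin 2) F, InB b ∧ InJ O n j ∧
        (!![0, -1; 1, 0] : Matrix (Fin 2) (Fin 2) F) * !![1, x; 0, 1] = b * j) ↔
      InMaxIdealPow O n x⁻¹ := by
  constructor
  · rintro ⟨b, j, ⟨hbdet, hb10⟩, ⟨hjdet, hj00, ⟨u, hu⟩, hj01, y, hy, hyval⟩, heq⟩
    -- entry (1,0): 1 = b 1 0 * j 0 0 + b 1 1 * j 1 0 = b 1 1 * j 1 0
    have h10 : b 1 1 * j 1 0 = 1 := by
      have := congrFun (congrFun heq 1) 0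
      simp [Matrix.mul_apply, Fin.sum_univ_two, hb10] at this
      exact this.symm
    -- entry (1,1): x = b 1 1 * j 1 1
    have h11 : b 1 1 * j 1 1 = x := by
      have := congrFun (congrFun heq 1) 1
      simp [Matrix.mul_apply, Fin.sum_univ_two, hb10] at this
      exact this.symm
    have hb11 : b 1 1 ≠ 0 := by
      intro h; rw [h, zero_mul] at h10; exact zero_ne_one h10
    have hj11 : j 1 1 ≠ 0 := by
      intro h; rw [h, mul_zero] at h11; exact hx h11.symm
    have hxinv : x⁻¹ = j 1 0 * (j 1 1)⁻¹ := by
      rw [← h11]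
      field_simp
      have : j 1 0 * (b 1 1 * j 1 1) = (b 1 1 * j 1 0) * j 1 1 := by ring
      exact h10.symm
    refine ⟨y * (u⁻¹ : Oˣ), Ideal.mul_mem_right _ _ hy, ?_⟩
    have huinv : (((u⁻¹ : Oˣ) : O) : F) = (j 1 1)⁻¹ := by
      rw [← hu]
      have hmul : ((u : O) : F) * (((u⁻¹ : Oˣ) : O) : F) = 1 := by
        norm_cast
        simp
      field_simp at hmul ⊢
      linear_combination hmul
    push_cast
    rw [hyval, huinv, hxinv]
  · rintro ⟨y, hy, hyval⟩
    refine ⟨!![x⁻¹, -1; 0, x], !![1, 0; x⁻¹, 1], ⟨?_, by simp⟩, ⟨?_, ⟨1, by simp⟩, ⟨1, by simp⟩, by simpa using O.zero_mem, ⟨y, hy, by simpa using hyval⟩⟩, ?_⟩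
    · simp [Matrix.det_fin_two_of]
      field_simp
    · simp [Matrix.det_fin_two_of]
    · ext i k
      fin_cases i <;> fin_cases k <;>
        simp [Matrix.mul_apply, Fin.sum_univ_two] <;> field_simp
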